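/- For all integers n \ge 11, R_{n+1}/R_n > 5. -/

import Mathlib

noncomputable def R (n : ℕ) : ℚ :=
  ∑ k ∈ Finset.range (n + 1),
    (Nat.choose n k : ℚ) * (Nat.choose (n + k) k : ℚ) * (1 / (2 * (k : ℚ) - 1))

/-- summand -/
noncomputable def Tm (n k : ℕ) : ℚ :=
  (Nat.choose n k : ℚ) * (Nat.choose (n + k) k : ℚ) * (1 / (2 * (k : ℚ) - 1))

/-- WZ certificate -/
noncomputable def Gc (n k : ℕ) : ℚ :=
  -4 * (k : ℚ)^2 * (Nat.choose (n+3) k : ℚ) * (Nat.choose (n+k) k : ℚ) / (((n:ℚ)+1) * ((n:ℚ)+3))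

lemma cast1 (m k : ℕ) : ((k:ℚ)+1) * (Nat.choose m (k+1) : ℚ) = ((m:ℚ) - k) * (Nat.choose m k : ℚ) := by
  rcases le_or_gt (k+1) m with h | h
  · have := Nat.choose_succ_right_eq m k
    have hc : ((Nat.choose m (k+1) * (k+1) : ℕ) : ℚ) = ((Nat.choose m k * (m - k) : ℕ) : ℚ) := by
      rw [this]
    rw [Nat.cast_mul, Nat.cast_mul, Nat.cast_sub (by omega)] at hc
    push_cast at hc ⊢
    linarith [hc]
  · rcases Nat.lt_or_ge m k with h2 | h2
    · rw [Nat.choose_eq_zero_of_lt (by omega), Nat.choose_eq_zero_of_lt h2]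
      ring
    · have hk : k = m := by omega
      subst hk
      rw [Nat.choose_eq_zero_of_lt (by omega)]
      simp

lemma cast2 (m k : ℕ) : ((m:ℚ)+1-k) * (Nat.choose (m+1) k : ℚ) = ((m:ℚ)+1) * (Nat.choose m k : ℚ) := by
  rcases le_or_gt k (m+1) with h | h
  · have := Nat.choose_mul_succ_eq m k
    have hc : ((Nat.choose m k * (m+1) : ℕ) : ℚ) = ((Nat.choose (m+1) k * (m+1-k) : ℕ) : ℚ) := by
      rw [this]
    rw [Nat.cast_mul, Nat.cast_mul, Nat.cast_sub h] at hc
    push_cast at hc ⊢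
    linarith [hc]
  · rw [Nat.choose_eq_zero_of_lt (by omega), Nat.choose_eq_zero_of_lt (by omega)]
    ring

lemma cast3 (n k : ℕ) : ((n:ℚ)+1) * (Nat.choose (n+k+1) k : ℚ) = ((n:ℚ)+(k:ℚ)+1) * (Nat.choose (n+k) k : ℚ) := by
  have h1 : Nat.choose (n+k) k = Nat.choose (n+k) n := by
    rw [← Nat.choose_symm (by omega)]
    congr 1
    omega
  have h2 : Nat.choose (n+k+1) k = Nat.choose (n+k+1) (n+1) := by
    rw [← Nat.choose_symm (by omega)]
    congr 1
    omega
  have := Nat.add_one_mul_choose_eq (n+k) n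
  have hc : (((n+k+1) * Nat.choose (n+k) n : ℕ) : ℚ) = ((Nat.choose (n+k+1) (n+1) * (n+1) : ℕ) : ℚ) := by
    rw [this]
  push_cast at hc
  rw [h1, h2]
  push_cast
  linarith [hc]

lemma key (n k : ℕ) :
    ((n:ℚ)+3) * Tm (n+3) k - (7*(n:ℚ)+13) * Tm (n+2) k + (7*(n:ℚ)+15) * Tm (n+1) k
      - ((n:ℚ)+1) * Tm n k = Gc n (k+1) - Gc n k := by
  have hn1 : ((n:ℚ)+1) ≠ 0 := by positivity
  have hn2 : ((n:ℚ)+2) ≠ 0 := by positivity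
  have hn3 : ((n:ℚ)+3) ≠ 0 := by positivity
  have hk1 : ((k:ℚ)+1) ≠ 0 := by positivity
  have hden : (2*(k:ℚ)-1) ≠ 0 := by
    rcases Nat.eq_zero_or_pos k with h | h
    · subst h; norm_num
    · have : (1:ℚ) ≤ (k:ℚ) := by exact_mod_cast h
      intro hc; nlinarith
  have hden2 : (2*((k:ℚ)+1)-1) ≠ 0 := by
    have : (0:ℚ) ≤ (k:ℚ) := by positivity
    intro hc; nlinarith
  -- expressions
  set x : ℚ := (Nat.choose (n+3) k : ℚ) with hx
  set y : ℚ := (Nat.choose (n+k) k : ℚ) with hy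
  have h2 : (Nat.choose (n+2) k : ℚ) = ((n:ℚ)+3-k) * x / ((n:ℚ)+3) := by
    have h := cast2 (n+2) k
    rw [show n+2+1 = n+3 from rfl] at h
    push_cast at h
    rw [eq_div_iff hn3]
    linarith [h]
  have h1 : (Nat.choose (n+1) k : ℚ) = ((n:ℚ)+2-k) * (((n:ℚ)+3-k) * x / ((n:ℚ)+3)) / ((n:ℚ)+2) := by
    have h := cast2 (n+1) k
    rw [show n+1+1 = n+2 from rfl] at h
    push_cast at h
    rw [h2] at h
    rw [eq_div_iff hn2]
    linarith [h]
  have h0 : (Nat.choose n k : ℚ) = ((n:ℚ)+1-k) * (((n:ℚ)+2-k) * (((n:ℚ)+3-k) * x / ((n:ℚ)+3)) / ((n:ℚ)+2)) / ((n:ℚ)+1) := by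
    have h := cast2 n k
    push_cast at h
    rw [h1] at h
    rw [eq_div_iff hn1]
    linarith [h]
  have j1 : (Nat.choose (n+1+k) k : ℚ) = ((n:ℚ)+(k:ℚ)+1) * y / ((n:ℚ)+1) := by
    have h := cast3 n k
    rw [show n+k+1 = n+1+k from by omega] at h
    rw [eq_div_iff hn1]
    linarith [h]
  have j2 : (Nat.choose (n+2+k) k : ℚ) = ((n:ℚ)+(k:ℚ)+2) * (((n:ℚ)+(k:ℚ)+1) * y / ((n:ℚ)+1)) / ((n:ℚ)+2) := by
    have h := cast3 (n+1) k
    rw [show n+1+k+1 = n+2+k from by omega, show n+1+k = n+1+k from rfl] at h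
    push_cast at h
    rw [j1] at h
    rw [eq_div_iff hn2]
    linarith [h]
  have j3 : (Nat.choose (n+3+k) k : ℚ) = ((n:ℚ)+(k:ℚ)+3) * (((n:ℚ)+(k:ℚ)+2) * (((n:ℚ)+(k:ℚ)+1) * y / ((n:ℚ)+1)) / ((n:ℚ)+2)) / ((n:ℚ)+3) := by
    have h := cast3 (n+2) k
    rw [show n+2+k+1 = n+3+k from by omega] at h
    push_cast at h
    rw [show n+2+k = n+2+k from rfl] at h
    rw [j2] at h
    rw [eq_div_iff hn3]
    linarith [h]
  have g1 : (Nat.choose (n+3) (k+1) : ℚ) = ((n:ℚ)+3-k) * x / ((k:ℚ)+1) := by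
    have h := cast1 (n+3) k
    push_cast at h
    rw [eq_div_iff hk1]
    linarith [h]
  have g2 : (Nat.choose (n+(k+1)) (k+1) : ℚ) = ((n:ℚ)+(k:ℚ)+1) * y / ((k:ℚ)+1) := by
    have h := Nat.add_one_mul_choose_eq (n+k) k
    have hc : (((n+k+1) * Nat.choose (n+k) k : ℕ) : ℚ) = ((Nat.choose (n+k+1) (k+1) * (k+1) : ℕ) : ℚ) := by
      rw [h]
    push_cast at hc
    rw [show n+(k+1) = n+k+1 from by omega]
    rw [eq_div_iff hk1]
    linarith [hc]
  simp only [Tm, Gc]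
  rw [h2, h1, h0, j1, j2, j3, g1, g2]
  rw [← hx, ← hy]
  push_cast
  generalize hd : (2*(k:ℚ)-1) = d at hden ⊢
  field_simp
  rw [← hd]
  ring

lemma R_pad (n N : ℕ) (h : n + 1 ≤ N) : R n = ∑ k ∈ Finset.range N, Tm n k := by
  rw [R]
  apply Finset.sum_subset
  · exact Finset.range_subset_range.2 h
  · intro k _ hk
    have : n < k := by simp [Finset.mem_range] at hk ⊢; omega
    simp [Tm, Nat.choose_eq_zero_of_lt this]

lemma rec3 (n : ℕ) : ((n:ℚ)+3) * R (n+3) = (7*(n:ℚ)+13) * R (n+2) - (7*(n:ℚ)+15) * R (n+1) + ((n:ℚ)+1) * R n := by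
  have h3 : R (n+3) = ∑ k ∈ Finset.range (n+4), Tm (n+3) k := R_pad _ _ (by omega)
  have h2 : R (n+2) = ∑ k ∈ Finset.range (n+4), Tm (n+2) k := R_pad _ _ (by omega)
  have h1 : R (n+1) = ∑ k ∈ Finset.range (n+4), Tm (n+1) k := R_pad _ _ (by omega)
  have h0 : R n = ∑ k ∈ Finset.range (n+4), Tm n k := R_pad _ _ (by omega)
  have tele : ∑ k ∈ Finset.range (n+4), (Gc n (k+1) - Gc n k) = Gc n (n+4) - Gc n 0 :=
    Finset.sum_range_sub (Gc n) (n+4)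
  have hsum : ∑ k ∈ Finset.range (n+4),
      (((n:ℚ)+3) * Tm (n+3) k - (7*(n:ℚ)+13) * Tm (n+2) k + (7*(n:ℚ)+15) * Tm (n+1) k
        - ((n:ℚ)+1) * Tm n k) = Gc n (n+4) - Gc n 0 := by
    rw [← tele]
    exact Finset.sum_congr rfl fun k _ => key n k
  have hG0 : Gc n 0 = 0 := by simp [Gc]
  have hGend : Gc n (n+4) = 0 := by
    have : Nat.choose (n+3) (n+4) = 0 := Nat.choose_eq_zero_of_lt (by omega)
    simp [Gc, this]
  rw [hG0, hGend] at hsum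
  simp only [Finset.sum_sub_distrib, Finset.sum_add_distrib, ← Finset.mul_sum] at hsum
  rw [h3, h2, h1, h0]
  linarith [hsum]

lemma R11 : R 11 = 3242377 := by
  show (Finset.range 12).sum (M := ℚ) _ = _
  rw [Finset.sum_range_succ, Finset.sum_range_succ, Finset.sum_range_succ,
    Finset.sum_range_succ, Finset.sum_range_succ, Finset.sum_range_succ,
    Finset.sum_range_succ, Finset.sum_range_succ, Finset.sum_range_succ,
    Finset.sum_range_succ, Finset.sum_range_succ, Finset.sum_range_succ]
  norm_num [Nat.choose_eq_factorial_div_factorial, Nat.factorial]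

lemma R12 : R 12 = 16421831 := by
  show (Finset.range 13).sum (M := ℚ) _ = _
  rw [Finset.sum_range_succ, Finset.sum_range_succ, Finset.sum_range_succ,
    Finset.sum_range_succ, Finset.sum_range_succ, Finset.sum_range_succ,
    Finset.sum_range_succ, Finset.sum_range_succ, Finset.sum_range_succ,
    Finset.sum_range_succ, Finset.sum_range_succ, Finset.sum_range_succ,
    Finset.sum_range_succ]
  norm_num [Nat.choose_eq_factorial_div_factorial, Nat.factorial]

lemma R13 : R 13 = 84196761 := by
  show (Finset.range 14).sum (M := ℚ) _ = _
  rw [Finset.sum_range_succ, Finset.sum_range_succ, Finset.sum_range_succ,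
    Finset.sum_range_succ, Finset.sum_range_succ, Finset.sum_range_succ,
    Finset.sum_range_succ, Finset.sum_range_succ, Finset.sum_range_succ,
    Finset.sum_range_succ, Finset.sum_range_succ, Finset.sum_range_succ,
    Finset.sum_range_succ, Finset.sum_range_succ]
  norm_num [Nat.choose_eq_factorial_div_factorial, Nat.factorial]

def S (n : ℕ) : Prop := 0 < R n ∧ 5 * R n < R (n+1) ∧ R (n+1) < 6 * R n

lemma step (n : ℕ) (hn : 11 ≤ n) (h1 : S n) (h2 : S (n+1)) : S (n+2) := by
  obtain ⟨p0, l0, u0⟩ := h1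
  obtain ⟨p1, l1, u1⟩ := h2
  have p2 : 0 < R (n+2) := lt_trans (by linarith) l1
  have hrec := rec3 n
  have hn3 : (0:ℚ) < (n:ℚ) + 3 := by positivity
  have hnq : (11:ℚ) ≤ (n:ℚ) := by exact_mod_cast hn
  constructor
  · exact p2
  constructor
  · -- 5 * R (n+2) < R (n+3)
    rw [show n+2+1 = n+3 from rfl]
    nlinarith [mul_pos hn3 p2, mul_lt_mul_of_pos_left l0 (by linarith : (0:ℚ) < (n:ℚ)+1),
      mul_lt_mul_of_pos_left u1 (by linarith : (0:ℚ) < 7*(n:ℚ)+15)]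
  · rw [show n+2+1 = n+3 from rfl]
    nlinarith [mul_lt_mul_of_pos_left u0 (by linarith : (0:ℚ) < (n:ℚ)+1),
      mul_lt_mul_of_pos_left l1 (by linarith : (0:ℚ) < 7*(n:ℚ)+15)]

lemma Sall : ∀ n, 11 ≤ n → S n := by
  have base11 : S 11 := by
    refine ⟨?_, ?_, ?_⟩ <;> norm_num [R11, R12, show (11:ℕ)+1 = 12 from rfl]
  have base12 : S 12 := by
    refine ⟨?_, ?_, ?_⟩ <;> norm_num [R12, R13, show (12:ℕ)+1 = 13 from rfl]
  intro n hn
  obtain ⟨m, rfl⟩ : ∃ m, n = 11 + m := ⟨n - 11, by omega⟩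
  clear hn
  induction m using Nat.twoStepInduction with
  | zero => exact base11
  | one => exact base12
  | more m ih1 ih2 =>
    have : 11 + (m + 2) = (11 + m) + 2 := by omega
    rw [this]
    exact step (11+m) (by omega) ih1 (by rw [show 11+m+1 = 11+(m+1) from by omega]; exact ih2)

theorem stmt_19 : ∀ n : ℕ, 11 ≤ n → R (n + 1) / R n > 5 := by
  intro n hn
  obtain ⟨p, l, _⟩ := Sall n hn
  rw [gt_iff_lt, lt_div_iff₀ p]
  linarith
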